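/- Suppose A ∈ ℂ^{n×n} has n distinct eigenvalues λ_1,…,λ_n. Then max_j κ(λ_j) ≤ κ_V(A) ≤ √( n·Σ_{j=1}^n κ(λ_j)² ) ≤ n·max_j κ(λ_j). -/

import Mathlib

open MeasureTheory Matrix
open scoped ENNReal

noncomputable section

/-- ℓ²→ℓ² operator norm of a complex square matrix. -/
def opNorm {n : ℕ} (A : Matrix (Fin n) (Fin n) ℂ) : ℝ :=
  ‖(Matrix.toEuclideanCLM (𝕜 := ℂ) A : EuclideanSpace ℂ (Fin n) →L[ℂ] EuclideanSpace ℂ (Fin n))‖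

/-- `svAsc A i` : the `i`-th *smallest* singular value of `A` (0-indexed). -/
def svAsc {n : ℕ} (A : Matrix (Fin n) (Fin n) ℂ) (i : Fin n) : ℝ :=
  Real.sqrt ((Matrix.isHermitian_conjTranspose_mul_self A).eigenvalues
    (Tuple.sort ((Matrix.isHermitian_conjTranspose_mul_self A).eigenvalues) i))

/-- `sLow A m` = σ_{n-m}(A), the (m+1)-th smallest singular value. -/
def sLow {n : ℕ} (A : Matrix (Fin n) (Fin n) ℂ) (m : ℕ) : ℝ :=
  if h : m < n then svAsc A ⟨m, h⟩ else 0

/-- the ε-pseudospectrum of a matrix, as a subset of ℂ. -/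
def pspec {n : ℕ} (ε : ℝ) (A : Matrix (Fin n) (Fin n) ℂ) : Set ℂ :=
  {z | sLow (z • (1 : Matrix (Fin n) (Fin n) ℂ) - A) 0 ≤ ε}

open scoped Classical in
/-- minimum gap between eigenvalues (counted with multiplicity). -/
def minGap {n : ℕ} (A : Matrix (Fin n) (Fin n) ℂ) : ℝ :=
  sInf {d | ∃ a ∈ A.charpoly.roots, ∃ b ∈ A.charpoly.roots.erase a, d = ‖a - b‖}

/-- eigenvector condition number. -/
def kappaV {n : ℕ} (A : Matrix (Fin n) (Fin n) ℂ) : ℝ≥0∞ :=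
  ⨅ (V : Matrix (Fin n) (Fin n) ℂ) (D : Matrix (Fin n) (Fin n) ℂ)
    (_ : IsUnit V) (_ : D.IsDiag) (_ : A = V * D * V⁻¹),
    ENNReal.ofReal (opNorm V * opNorm V⁻¹)

/-- spectral radius of a matrix. -/
def spr {n : ℕ} (A : Matrix (Fin n) (Fin n) ℂ) : ℝ :=
  sSup {x : ℝ | ∃ μ ∈ spectrum ℂ A, x = ‖μ‖}

/-- ℓ∞→ℓ∞ operator norm (max absolute row sum). -/
def infNorm {n : ℕ} (A : Matrix (Fin n) (Fin n) ℂ) : ℝ :=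
  ⨆ i, ∑ j, ‖A i j‖

/-- ℓ² norm of a vector in ℂⁿ. -/
def l2norm {n : ℕ} (v : Fin n → ℂ) : ℝ :=
  Real.sqrt (∑ j, ‖v j‖ ^ 2)

/-- standard complex Gaussian measure on ℂ. -/
def gaussianC : Measure ℂ :=
  MeasureTheory.volume.withDensity fun z => ENNReal.ofReal (Real.pi⁻¹ * Real.exp (-(‖z‖ ^ 2)))

/-- law of δ ⬝ g : δ Bernoulli(ρ), g standard complex Gaussian, independent. -/
def sparseG (ρ : ℝ) : Measure ℂ :=
  ENNReal.ofReal ρ • gaussianC + ENNReal.ofReal (1 - ρ) • Measure.dirac 0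

/-- law of a vector with i.i.d. sparse-Gaussian entries. -/
def vecLaw (n : ℕ) (ρ : ℝ) : Measure (Fin n → ℂ) :=
  Measure.pi fun _ => sparseG ρ

instance matrixMeasurableSpace {n : ℕ} : MeasurableSpace (Matrix (Fin n) (Fin n) ℂ) :=
  inferInstanceAs (MeasurableSpace (Fin n → Fin n → ℂ))

/-- law of the random matrix N_g with i.i.d. sparse-Gaussian entries. -/
def matLaw (n : ℕ) (ρ : ℝ) : Measure (Matrix (Fin n) (Fin n) ℂ) :=
  Measure.pi fun _ : Fin n => vecLaw n ρ

/-- Lévy concentration p(v,r) of ⟨ĝ ⊙ δ̂, v⟩. -/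
def pconc (n : ℕ) (ρ : ℝ) (v : Fin n → ℂ) (r : ℝ) : ℝ≥0∞ :=
  ⨆ z : ℂ, vecLaw n ρ {x | ‖(∑ j, x j * (starRingEnd ℂ) (v j)) - z‖ ≤ r}

/-- incompressible unit vectors. -/
def Incomp (n : ℕ) (ρ : ℝ) (r s : ℝ) : Set (Fin n → ℂ) :=
  {v | l2norm v = 1 ∧ pconc n ρ v r ≤ ENNReal.ofReal s}

/-- compressible unit vectors. -/
def Comp (n : ℕ) (ρ : ℝ) (r s : ℝ) : Set (Fin n → ℂ) :=
  {v | l2norm v = 1 ∧ ENNReal.ofReal s ≤ pconc n ρ v r}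

/-- eigenvalue condition number κ(λ_j) read off from a diagonalizing matrix V:
    (norm of j-th column of V) times (norm of j-th row of V⁻¹). -/
def evCond {n : ℕ} (V : Matrix (Fin n) (Fin n) ℂ) (j : Fin n) : ℝ :=
  l2norm (fun i => V i j) * l2norm (fun i => V⁻¹ j i)

/-- the event that `B` has `n` distinct eigenvalues with all squared
    eigenvalue condition numbers at most τ. -/
def distinctCondEvent {n : ℕ} (τ : ℝ) (B : Matrix (Fin n) (Fin n) ℂ) : Prop :=
  ∃ (V : Matrix (Fin n) (Fin n) ℂ) (lam : Fin n → ℂ), Function.Injective lam ∧ IsUnit V ∧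
    B = V * Matrix.diagonal lam * V⁻¹ ∧ ∀ j, (evCond V j) ^ 2 ≤ τ

set_option maxHeartbeats 1000000
set_option synthInstance.maxHeartbeats 400000

lemma l2norm_eq {n : ℕ} (v : Fin n → ℂ) :
    l2norm v = ‖(WithLp.equiv 2 (Fin n → ℂ)).symm v‖ := by
  rw [l2norm, EuclideanSpace.norm_eq]
  simp

lemma l2norm_nonneg {n : ℕ} (v : Fin n → ℂ) : 0 ≤ l2norm v := Real.sqrt_nonneg _

lemma sq_l2norm {n : ℕ} (v : Fin n → ℂ) : l2norm v ^ 2 = ∑ j, ‖v j‖ ^ 2 :=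
  Real.sq_sqrt (Finset.sum_nonneg fun _ _ => sq_nonneg _)

lemma l2norm_pos {n : ℕ} {v : Fin n → ℂ} (hv : v ≠ 0) : 0 < l2norm v := by
  rw [l2norm_eq]
  rw [norm_pos_iff]
  intro h
  apply hv
  have := congrArg (WithLp.equiv 2 (Fin n → ℂ)) h
  simpa using this

lemma l2norm_mul_left {n : ℕ} (a : ℂ) (v : Fin n → ℂ) :
    l2norm (fun i => a * v i) = ‖a‖ * l2norm v := by
  unfold l2norm
  rw [← Real.sqrt_sq (norm_nonneg a), ← Real.sqrt_mul (sq_nonneg _), Finset.mul_sum]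
  congr 1
  refine Finset.sum_congr rfl fun i _ => ?_
  show ‖a * v i‖ ^ 2 = _
  rw [norm_mul, mul_pow]

lemma l2norm_conj {n : ℕ} (v : Fin n → ℂ) :
    l2norm (fun i => (starRingEnd ℂ) (v i)) = l2norm v := by
  unfold l2norm
  congr 1
  exact Finset.sum_congr rfl fun i _ => by rw [Complex.norm_conj]

lemma opNorm_nonneg {n : ℕ} (A : Matrix (Fin n) (Fin n) ℂ) : 0 ≤ opNorm A := norm_nonneg _

lemma toCLM_apply {n : ℕ} (A : Matrix (Fin n) (Fin n) ℂ) (x : Fin n → ℂ) :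
    (Matrix.toEuclideanCLM (𝕜 := ℂ) A) ((WithLp.equiv 2 _).symm x)
      = (WithLp.equiv 2 _).symm (A *ᵥ x) := by
  rfl

lemma col_le_opNorm {n : ℕ} (A : Matrix (Fin n) (Fin n) ℂ) (j : Fin n) :
    l2norm (fun i => A i j) ≤ opNorm A := by
  have h := (Matrix.toEuclideanCLM (𝕜 := ℂ) A).le_opNorm
    ((WithLp.equiv 2 (Fin n → ℂ)).symm (Pi.single j 1))
  rw [toCLM_apply, Matrix.mulVec_single_one] at h
  have hx : ‖(WithLp.equiv 2 (Fin n → ℂ)).symm (Pi.single j (1:ℂ))‖ = 1 := by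
    rw [WithLp.equiv_symm_apply, EuclideanSpace.toLp_single, EuclideanSpace.norm_single, norm_one]
  rw [hx, mul_one] at h
  rw [l2norm_eq]
  exact h

lemma opNorm_conjTranspose {n : ℕ} (A : Matrix (Fin n) (Fin n) ℂ) :
    opNorm Aᴴ = opNorm A := by
  have h : Matrix.toEuclideanCLM (𝕜 := ℂ) Aᴴ = star (Matrix.toEuclideanCLM (𝕜 := ℂ) A) := by
    rw [← Matrix.star_eq_conjTranspose, map_star]
  unfold opNorm
  rw [h, ContinuousLinearMap.star_eq_adjoint]
  exact ContinuousLinearMap.adjoint.norm_map _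

lemma row_le_opNorm {n : ℕ} (A : Matrix (Fin n) (Fin n) ℂ) (j : Fin n) :
    l2norm (fun i => A j i) ≤ opNorm A := by
  have h := col_le_opNorm Aᴴ j
  rw [opNorm_conjTranspose] at h
  refine le_trans (le_of_eq ?_) h
  unfold l2norm
  congr 1
  refine Finset.sum_congr rfl fun i _ => ?_
  show ‖A j i‖ ^ 2 = ‖Aᴴ i j‖ ^ 2
  rw [Matrix.conjTranspose_apply, Complex.star_def, Complex.norm_conj]

lemma opNorm_mul_le {n : ℕ} (A B : Matrix (Fin n) (Fin n) ℂ) :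
    opNorm (A * B) ≤ opNorm A * opNorm B := by
  unfold opNorm
  rw [_root_.map_mul]
  exact norm_mul_le _ _

lemma opNorm_le_frobenius {n : ℕ} (A : Matrix (Fin n) (Fin n) ℂ) :
    opNorm A ≤ Real.sqrt (∑ i, ∑ j, ‖A i j‖ ^ 2) := by
  refine ContinuousLinearMap.opNorm_le_bound _ (Real.sqrt_nonneg _) fun x => ?_
  have hx : x = (WithLp.equiv 2 (Fin n → ℂ)).symm (WithLp.equiv 2 (Fin n → ℂ) x) := rfl
  rw [hx, toCLM_apply, ← l2norm_eq, ← l2norm_eq]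
  set y := WithLp.equiv 2 (Fin n → ℂ) x with hy
  have key : ∀ i, ‖(A *ᵥ y) i‖ ^ 2
      ≤ (∑ j, ‖A i j‖ ^ 2) * l2norm y ^ 2 := by
    intro i
    have h1 := norm_inner_le_norm (𝕜 := ℂ)
      ((WithLp.equiv 2 (Fin n → ℂ)).symm (fun j => (starRingEnd ℂ) (A i j)))
      ((WithLp.equiv 2 (Fin n → ℂ)).symm y)
    have h2 : (inner ℂ ((WithLp.equiv 2 (Fin n → ℂ)).symm fun j => (starRingEnd ℂ) (A i j))
        ((WithLp.equiv 2 (Fin n → ℂ)).symm y) : ℂ) = (A *ᵥ y) i := by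
      simp [PiLp.inner_apply, RCLike.inner_apply,
        Matrix.mulVec, dotProduct]
      exact Finset.sum_congr rfl fun _ _ => mul_comm _ _
    rw [h2, ← l2norm_eq, ← l2norm_eq, l2norm_conj] at h1
    have h3 : ‖(A *ᵥ y) i‖ ≤ l2norm (fun j => A i j) * l2norm y := h1
    calc ‖(A *ᵥ y) i‖ ^ 2 ≤ (l2norm (fun j => A i j) * l2norm y) ^ 2 := by
          exact pow_le_pow_left₀ (norm_nonneg _) h3 2
      _ = (∑ j, ‖A i j‖ ^ 2) * l2norm y ^ 2 := by
          rw [mul_pow, sq_l2norm]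
  have : l2norm (A *ᵥ y) ^ 2 ≤ (∑ i, ∑ j, ‖A i j‖ ^ 2) * l2norm y ^ 2 := by
    rw [sq_l2norm, Finset.sum_mul]
    exact Finset.sum_le_sum fun i _ => key i
  calc l2norm (A *ᵥ y) = Real.sqrt (l2norm (A *ᵥ y) ^ 2) :=
        (Real.sqrt_sq (l2norm_nonneg _)).symm
    _ ≤ Real.sqrt ((∑ i, ∑ j, ‖A i j‖ ^ 2) * l2norm y ^ 2) :=
        Real.sqrt_le_sqrt this
    _ = Real.sqrt (∑ i, ∑ j, ‖A i j‖ ^ 2) * l2norm y := by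
        rw [Real.sqrt_mul (Finset.sum_nonneg fun _ _ => Finset.sum_nonneg fun _ _ => sq_nonneg _),
          Real.sqrt_sq (l2norm_nonneg _)]

lemma evCond_nonneg {n : ℕ} (V : Matrix (Fin n) (Fin n) ℂ) (j : Fin n) : 0 ≤ evCond V j :=
  mul_nonneg (l2norm_nonneg _) (l2norm_nonneg _)

lemma evCond_exists_match {n : ℕ} (V V' D' : Matrix (Fin n) (Fin n) ℂ) (lam : Fin n → ℂ)
    (hinj : Function.Injective lam) (hV : IsUnit V) (hV' : IsUnit V') (hD' : D'.IsDiag)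
    (heq : V * Matrix.diagonal lam * V⁻¹ = V' * D' * V'⁻¹) (j : Fin n) :
    ∃ k, evCond V j = evCond V' k := by
  have hVd : IsUnit V.det := (Matrix.isUnit_iff_isUnit_det V).mp hV
  have hV'd : IsUnit V'.det := (Matrix.isUnit_iff_isUnit_det V').mp hV'
  set M : Matrix (Fin n) (Fin n) ℂ := V'⁻¹ * V with hM
  have hVM : V' * M = V := Matrix.mul_nonsing_inv_cancel_left V' V hV'd
  have hMD : M * Matrix.diagonal lam = D' * M := by
    have h1 : V * Matrix.diagonal lam * V⁻¹ * V = V' * D' * V'⁻¹ * V := by rw [heq]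
    rw [Matrix.nonsing_inv_mul_cancel_right V _ hVd] at h1
    calc M * Matrix.diagonal lam = V'⁻¹ * (V * Matrix.diagonal lam) := Matrix.mul_assoc _ _ _
      _ = V'⁻¹ * (V' * D' * V'⁻¹ * V) := by rw [h1]
      _ = V'⁻¹ * (V' * (D' * (V'⁻¹ * V))) := by rw [Matrix.mul_assoc (V' * D'), Matrix.mul_assoc V']
      _ = D' * M := by rw [Matrix.nonsing_inv_mul_cancel_left V' _ hV'd]
  have hentry : ∀ i k, M i k ≠ 0 → lam k = D' i i := by
    intro i k hik
    have h1 := congrFun (congrFun hMD i) k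
    rw [Matrix.mul_diagonal] at h1
    have h2 : (D' * M) i k = D' i i * M i k := by
      conv_lhs => rw [← hD'.diagonal_diag]
      rw [Matrix.diagonal_mul]
      rfl
    rw [h2] at h1
    have h3 : M i k * lam k = M i k * (D' i i) := by rw [h1, mul_comm]
    exact mul_left_cancel₀ hik h3
  have hrow : ∀ i k k', M i k ≠ 0 → M i k' ≠ 0 → k = k' := fun i k k' h h' =>
    hinj ((hentry i k h).trans (hentry i k' h').symm)
  have hMl : (V⁻¹ * V') * M = 1 := by
    rw [hM, Matrix.mul_assoc, Matrix.mul_nonsing_inv_cancel_left V' V hV'd,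
      Matrix.nonsing_inv_mul V hVd]
  have hcol : ∀ k, ∃ i, M i k ≠ 0 := by
    intro k
    by_contra h
    push_neg at h
    have h1 : ((V⁻¹ * V') * M) k k = 1 := by rw [hMl, Matrix.one_apply_eq]
    rw [Matrix.mul_apply] at h1
    simp only [h, mul_zero, Finset.sum_const_zero] at h1
    exact zero_ne_one h1
  choose σ hσ using hcol
  have hσinj : Function.Injective σ := fun k k' h => hrow (σ k) k k' (hσ k) (h ▸ hσ k')
  have hσsurj : Function.Surjective σ := Finite.surjective_of_injective hσinj
  have hzero : ∀ i k, i ≠ σ k → M i k = 0 := by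
    intro i k hne
    by_contra hMik
    obtain ⟨k', hk'⟩ := hσsurj i
    have e1 : lam k = D' i i := hentry i k hMik
    have e2 : lam k' = D' i i := hentry i k' (by rw [← hk']; exact hσ k')
    have hkk : k = k' := hinj (e1.trans e2.symm)
    exact hne (by rw [hkk, hk'])
  set c : Fin n → ℂ := fun k => M (σ k) k with hcdef
  have hc : ∀ k, c k ≠ 0 := hσ
  have hMapply : ∀ i k, M i k = if i = σ k then c k else 0 := by
    intro i k
    by_cases h : i = σ k
    · rw [if_pos h, h]
    · rw [if_neg h]; exact hzero i k h
  have hVcol : ∀ i k, V i k = V' i (σ k) * c k := by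
    intro i k
    conv_lhs => rw [← hVM]
    rw [Matrix.mul_apply, Fintype.sum_eq_single (σ k)
      (fun b hb => by rw [hzero b k hb, mul_zero])]
  set N : Matrix (Fin n) (Fin n) ℂ := Matrix.of (fun i k => if k = σ i then (c i)⁻¹ else 0) with hN
  have hNM : N * M = 1 := by
    ext i k
    rw [Matrix.mul_apply, Fintype.sum_eq_single (σ i) (fun b hb => by
      show (if b = σ i then (c i)⁻¹ else 0) * M b k = 0
      rw [if_neg hb, zero_mul])]
    show (if σ i = σ i then (c i)⁻¹ else 0) * M (σ i) k = _
    rw [if_pos rfl, hMapply (σ i) k]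
    by_cases h : i = k
    · subst h
      rw [if_pos rfl, inv_mul_cancel₀ (hc i), Matrix.one_apply_eq]
    · rw [if_neg (fun hh => h (hσinj hh)), mul_zero, Matrix.one_apply_ne h]
  have hVinv : V⁻¹ = N * V'⁻¹ := by
    apply Matrix.inv_eq_left_inv
    calc N * V'⁻¹ * V = N * (V'⁻¹ * V) := Matrix.mul_assoc _ _ _
      _ = 1 := hNM
  have hVinvrow : ∀ k i, V⁻¹ k i = (c k)⁻¹ * V'⁻¹ (σ k) i := by
    intro k i
    rw [hVinv, Matrix.mul_apply, Fintype.sum_eq_single (σ k) (fun b hb => by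
      show (if b = σ k then (c k)⁻¹ else 0) * V'⁻¹ b i = 0
      rw [if_neg hb, zero_mul])]
    show (if σ k = σ k then (c k)⁻¹ else 0) * V'⁻¹ (σ k) i = _
    rw [if_pos rfl]
  refine ⟨σ j, ?_⟩
  unfold evCond
  rw [show (fun i => V i j) = (fun i => c j * V' i (σ j)) from
      funext fun i => by rw [hVcol, mul_comm]]
  rw [show (fun i => V⁻¹ j i) = (fun i => (c j)⁻¹ * V'⁻¹ (σ j) i) from
      funext fun i => hVinvrow j i]
  rw [l2norm_mul_left, l2norm_mul_left, norm_inv]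
  have hca : ‖c j‖ ≠ 0 := by
    simpa using hc j
  field_simp

lemma scale_bound {n : ℕ} (V : Matrix (Fin n) (Fin n) ℂ) (lam : Fin n → ℂ) (hV : IsUnit V) :
    ∃ W : Matrix (Fin n) (Fin n) ℂ, IsUnit W ∧
      W * Matrix.diagonal lam * W⁻¹ = V * Matrix.diagonal lam * V⁻¹ ∧
      opNorm W * opNorm W⁻¹ ≤ ∑ j, evCond V j := by
  have hVd : IsUnit V.det := (Matrix.isUnit_iff_isUnit_det V).mp hV
  set s : Fin n → ℝ := fun j => l2norm (fun i => V i j) with hs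
  set r : Fin n → ℝ := fun j => l2norm (fun i => V⁻¹ j i) with hr
  have hVV : V⁻¹ * V = 1 := Matrix.nonsing_inv_mul V hVd
  have hdiagone : ∀ j, ∑ k, V⁻¹ j k * V k j = 1 := by
    intro j
    have h := congrFun (congrFun hVV j) j
    rwa [Matrix.mul_apply, Matrix.one_apply_eq] at h
  have hspos : ∀ j, 0 < s j := by
    intro j
    apply l2norm_pos
    intro h0
    have h1 := hdiagone j
    rw [Finset.sum_eq_zero (fun k _ => by
      rw [show V k j = 0 from congrFun h0 k, mul_zero])] at h1
    exact zero_ne_one h1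
  have hrpos : ∀ j, 0 < r j := by
    intro j
    apply l2norm_pos
    intro h0
    have h1 := hdiagone j
    rw [Finset.sum_eq_zero (fun k _ => by
      rw [show V⁻¹ j k = 0 from congrFun h0 k, zero_mul])] at h1
    exact zero_ne_one h1
  set c : Fin n → ℂ := fun j => (Real.sqrt (r j / s j) : ℂ) with hc
  have hcpos : ∀ j, 0 < Real.sqrt (r j / s j) := fun j =>
    Real.sqrt_pos.mpr (div_pos (hrpos j) (hspos j))
  have hcne : ∀ j, c j ≠ 0 := fun j => by
    simp only [hc, ne_eq, Complex.ofReal_eq_zero]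
    exact ne_of_gt (hcpos j)
  have habs : ∀ j, ‖c j‖ = Real.sqrt (r j / s j) := fun j => by
    rw [hc]
    exact (Complex.norm_real _).trans ((Real.norm_eq_abs _).trans (abs_of_pos (hcpos j)))
  set W := V * Matrix.diagonal c with hW
  have hWinv : W⁻¹ = Matrix.diagonal (fun j => (c j)⁻¹) * V⁻¹ := by
    apply Matrix.inv_eq_left_inv
    calc Matrix.diagonal (fun j => (c j)⁻¹) * V⁻¹ * (V * Matrix.diagonal c)
        = Matrix.diagonal (fun j => (c j)⁻¹) * (V⁻¹ * (V * Matrix.diagonal c)) :=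
          Matrix.mul_assoc _ _ _
      _ = Matrix.diagonal (fun j => (c j)⁻¹) * Matrix.diagonal c := by
          rw [← Matrix.mul_assoc V⁻¹, hVV, one_mul]
      _ = 1 := by
          rw [Matrix.diagonal_mul_diagonal,
            show (fun j => (c j)⁻¹ * c j) = fun _ => (1:ℂ) from
              funext fun j => inv_mul_cancel₀ (hcne j), Matrix.diagonal_one]
  have hWunit : IsUnit W := by
    rw [Matrix.isUnit_iff_isUnit_det, hW, Matrix.det_mul, Matrix.det_diagonal]
    exact hVd.mul (isUnit_iff_ne_zero.mpr (Finset.prod_ne_zero_iff.mpr fun j _ => hcne j))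
  refine ⟨W, hWunit, ?_, ?_⟩
  · have hdd : Matrix.diagonal c * Matrix.diagonal lam * Matrix.diagonal (fun j => (c j)⁻¹)
        = Matrix.diagonal lam := by
      rw [Matrix.diagonal_mul_diagonal, Matrix.diagonal_mul_diagonal,
        show (fun j => c j * lam j * (c j)⁻¹) = lam from funext fun j => by
          rw [mul_comm (c j) (lam j), mul_assoc, mul_inv_cancel₀ (hcne j), mul_one]]
    rw [hWinv, hW]
    calc V * Matrix.diagonal c * Matrix.diagonal lam * (Matrix.diagonal (fun j => (c j)⁻¹) * V⁻¹)
        = V * (Matrix.diagonal c * Matrix.diagonal lam * Matrix.diagonal (fun j => (c j)⁻¹)) * V⁻¹ := by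
          simp only [Matrix.mul_assoc]
      _ = V * Matrix.diagonal lam * V⁻¹ := by rw [hdd]
  · have hWcol : ∀ i j, W i j = V i j * c j := fun i j => Matrix.mul_diagonal _ _ _ _
    have hWinvrow : ∀ j i, W⁻¹ j i = (c j)⁻¹ * V⁻¹ j i := fun j i => by
      rw [hWinv]; exact Matrix.diagonal_mul _ _ _ _
    have hsum1 : ∑ i, ∑ j, ‖W i j‖ ^ 2 = ∑ j, evCond V j := by
      rw [Finset.sum_comm]
      refine Finset.sum_congr rfl fun j _ => ?_
      have h1 : ∑ i, ‖W i j‖ ^ 2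
          = ‖c j‖ ^ 2 * ∑ i, ‖V i j‖ ^ 2 := by
        rw [Finset.mul_sum]
        refine Finset.sum_congr rfl fun i _ => ?_
        rw [hWcol, norm_mul, mul_pow]
        ring
      rw [h1, habs j, Real.sq_sqrt (le_of_lt (div_pos (hrpos j) (hspos j)))]
      have h2 : (∑ i, ‖V i j‖ ^ 2) = s j ^ 2 := (sq_l2norm _).symm
      rw [h2]
      show r j / s j * s j ^ 2 = s j * r j
      field_simp [ne_of_gt (hspos j)]
    have hsum2 : ∑ j, ∑ i, ‖W⁻¹ j i‖ ^ 2 = ∑ j, evCond V j := by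
      refine Finset.sum_congr rfl fun j _ => ?_
      have h1 : ∑ i, ‖W⁻¹ j i‖ ^ 2
          = (‖c j‖)⁻¹ ^ 2 * ∑ i, ‖V⁻¹ j i‖ ^ 2 := by
        rw [Finset.mul_sum]
        refine Finset.sum_congr rfl fun i _ => ?_
        rw [hWinvrow, norm_mul, norm_inv, mul_pow]
      have h2 : (∑ i, ‖V⁻¹ j i‖ ^ 2) = r j ^ 2 := (sq_l2norm _).symm
      rw [h1, habs j, h2, ← Real.sqrt_inv, Real.sq_sqrt
        (inv_nonneg.mpr (le_of_lt (div_pos (hrpos j) (hspos j))))]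
      show (r j / s j)⁻¹ * r j ^ 2 = s j * r j
      rw [inv_div]
      field_simp [ne_of_gt (hrpos j)]
    have hK0 : 0 ≤ ∑ j, evCond V j := Finset.sum_nonneg fun j _ => evCond_nonneg V j
    have h1 : opNorm W ≤ Real.sqrt (∑ j, evCond V j) := by
      rw [← hsum1]; exact opNorm_le_frobenius W
    have h2 : opNorm W⁻¹ ≤ Real.sqrt (∑ j, evCond V j) := by
      rw [← hsum2]; exact opNorm_le_frobenius W⁻¹
    calc opNorm W * opNorm W⁻¹ ≤ Real.sqrt (∑ j, evCond V j) * Real.sqrt (∑ j, evCond V j) :=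
          mul_le_mul h1 h2 (opNorm_nonneg _) (Real.sqrt_nonneg _)
      _ = ∑ j, evCond V j := Real.mul_self_sqrt hK0


/-- eigenvalue condition numbers versus eigenvector condition number. -/
theorem evCond_le_kappaV {n : ℕ} (hn : 0 < n) (A V : Matrix (Fin n) (Fin n) ℂ)
    (lam : Fin n → ℂ) (hinj : Function.Injective lam) (hV : IsUnit V)
    (hdiag : A = V * Matrix.diagonal lam * V⁻¹) :
    ENNReal.ofReal (⨆ j, evCond V j) ≤ kappaV A ∧
    kappaV A ≤ ENNReal.ofReal (Real.sqrt (n * ∑ j, evCond V j ^ 2)) ∧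
    Real.sqrt (n * ∑ j, evCond V j ^ 2) ≤ n * ⨆ j, evCond V j := by
  haveI : Nonempty (Fin n) := Fin.pos_iff_nonempty.mp hn
  have hSle : ∀ j, evCond V j ≤ ⨆ k, evCond V k := fun j =>
    le_ciSup (Set.Finite.bddAbove (Set.finite_range _)) j
  have hS0 : 0 ≤ ⨆ j, evCond V j :=
    le_trans (evCond_nonneg V (Classical.arbitrary _)) (hSle _)
  have hsumsq0 : 0 ≤ ∑ j, evCond V j ^ 2 := Finset.sum_nonneg fun j _ => sq_nonneg _
  refine ⟨?_, ?_, ?_⟩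
  · -- lower bound
    rw [kappaV]
    refine le_iInf fun V' => le_iInf fun D' => le_iInf fun hV' => le_iInf fun hD' =>
      le_iInf fun hEq => ENNReal.ofReal_le_ofReal ?_
    refine ciSup_le fun j => ?_
    obtain ⟨k, hk⟩ := evCond_exists_match V V' D' lam hinj hV hV' hD'
      (hdiag.symm.trans hEq) j
    rw [hk]
    exact mul_le_mul (col_le_opNorm V' k) (row_le_opNorm V'⁻¹ k)
      (l2norm_nonneg _) (opNorm_nonneg _)
  · -- upper bound
    obtain ⟨W, hWu, hWeq, hWle⟩ := scale_bound V lam hV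
    have step1 : kappaV A ≤ ENNReal.ofReal (opNorm W * opNorm W⁻¹) := by
      rw [kappaV]
      exact iInf_le_of_le W <| iInf_le_of_le (Matrix.diagonal lam) <| iInf_le_of_le hWu <|
        iInf_le_of_le (Matrix.isDiag_diagonal lam) <|
        iInf_le_of_le (by rw [hdiag, hWeq]) le_rfl
    refine step1.trans (ENNReal.ofReal_le_ofReal ?_)
    refine hWle.trans ?_
    have hcs : (∑ j, evCond V j) ^ 2 ≤ (n : ℝ) * ∑ j, evCond V j ^ 2 := by
      have := sq_sum_le_card_mul_sum_sq (s := Finset.univ) (f := fun j => evCond V j)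
      simpa using this
    calc (∑ j, evCond V j) = Real.sqrt ((∑ j, evCond V j) ^ 2) :=
          (Real.sqrt_sq (Finset.sum_nonneg fun j _ => evCond_nonneg V j)).symm
      _ ≤ Real.sqrt ((n : ℝ) * ∑ j, evCond V j ^ 2) := Real.sqrt_le_sqrt hcs
  · -- third inequality
    have h1 : ∑ j, evCond V j ^ 2 ≤ (n : ℝ) * (⨆ j, evCond V j) ^ 2 := by
      calc ∑ j, evCond V j ^ 2 ≤ ∑ _j : Fin n, (⨆ j, evCond V j) ^ 2 :=
            Finset.sum_le_sum fun j _ =>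
              pow_le_pow_left₀ (evCond_nonneg V j) (hSle j) 2
        _ = (n : ℝ) * (⨆ j, evCond V j) ^ 2 := by
            rw [Finset.sum_const, Finset.card_univ, Fintype.card_fin, nsmul_eq_mul]
    calc Real.sqrt ((n : ℝ) * ∑ j, evCond V j ^ 2)
        ≤ Real.sqrt ((n : ℝ) * ((n : ℝ) * (⨆ j, evCond V j) ^ 2)) :=
          Real.sqrt_le_sqrt (mul_le_mul_of_nonneg_left h1 (Nat.cast_nonneg n))
      _ = (n : ℝ) * ⨆ j, evCond V j := by
          rw [show (n : ℝ) * ((n : ℝ) * (⨆ j, evCond V j) ^ 2)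
              = ((n : ℝ) * ⨆ j, evCond V j) ^ 2 by ring]
          exact Real.sqrt_sq (mul_nonneg (Nat.cast_nonneg n) hS0)


end
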